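/- The pointwise product of a finite type function of degree ≤ m and a finite type function of degree ≤ n on a group G is a finite type function of degree ≤ m + n. -/

import Mathlib

noncomputable def augIdeal (R G : Type*) [CommRing R] [Group G] : Ideal (MonoidAlgebra R G) :=
  RingHom.ker ((MonoidAlgebra.lift R R G) 1)

noncomputable def linExt {R G : Type*} [CommRing R] [Group G] (f : G → R) :
    MonoidAlgebra R G →ₗ[R] R :=
  (Finsupp.linearCombination R f).comp (MonoidAlgebra.coeffLinearEquiv R).toLinearMap

def FiniteType (R : Type*) {G : Type*} [CommRing R] [Group G] (n : ℕ) (f : G → R) : Prop :=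
  ∀ x ∈ (augIdeal R G) ^ (n + 1), linExt f x = 0

open TensorProduct

namespace FTAux

variable (R G : Type*) [CommRing R] [Group G]

lemma one_eq_top' : (1 : Ideal (MonoidAlgebra R G)) = ⊤ := by
  rw [Submodule.one_eq_span, eq_top_iff]
  intro x _
  exact Submodule.mem_span_singleton.2 ⟨x, by rw [smul_eq_mul, mul_one]⟩

lemma aug_mul_mem (x : MonoidAlgebra R G) (hx : x ∈ augIdeal R G) (y : MonoidAlgebra R G) :
    x * y ∈ augIdeal R G := by
  rw [augIdeal, RingHom.mem_ker] at hx ⊢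
  rw [map_mul, hx, zero_mul]

/-- Powers of the augmentation ideal absorb right multiplication. -/
lemma pow_absorb : ∀ (k : ℕ) (x : MonoidAlgebra R G), x ∈ (augIdeal R G) ^ k →
    ∀ a : MonoidAlgebra R G, x * a ∈ (augIdeal R G) ^ k
  | 0 => by
    intro x _ a
    rw [Submodule.pow_zero, one_eq_top']
    trivial
  | (k + 1) => by
    intro x hx a
    rw [Submodule.pow_succ] at hx ⊢
    refine Submodule.mul_induction_on hx (fun u hu v hv => ?_) (fun y z hy hz => ?_)
    · rw [mul_assoc]
      exact Submodule.mul_mem_mul hu (aug_mul_mem R G v hv a)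
    · rw [add_mul]; exact add_mem hy hz

lemma mul_pow_mem : ∀ (j : ℕ) (y : MonoidAlgebra R G), y ∈ (augIdeal R G) ^ j →
    ∀ (i : ℕ) (x : MonoidAlgebra R G), x ∈ (augIdeal R G) ^ i →
    x * y ∈ (augIdeal R G) ^ (i + j)
  | 0 => fun y _ i x hx => by
    rw [Nat.add_zero]; exact pow_absorb R G i x hx y
  | (j + 1) => fun y hy i x hx => by
    rw [Submodule.pow_succ] at hy
    rw [← Nat.add_assoc, Submodule.pow_succ]
    refine Submodule.mul_induction_on hy (fun u hu v hv => ?_) (fun a b ha hb => ?_)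
    · rw [← mul_assoc]
      exact Submodule.mul_mem_mul (mul_pow_mem j u hu i x hx) hv
    · rw [mul_add]; exact add_mem ha hb

lemma pow_le_pow {i j : ℕ} (h : j ≤ i) : (augIdeal R G) ^ i ≤ (augIdeal R G) ^ j := by
  induction i with
  | zero =>
    have hj : j = 0 := Nat.le_zero.1 h
    subst hj; exact le_rfl
  | succ i ih =>
    rcases Nat.eq_or_lt_of_le h with rfl | h'
    · exact le_rfl
    · refine le_trans ?_ (ih (Nat.lt_succ_iff.1 h'))
      rw [Submodule.pow_succ]
      exact Submodule.mul_le.2 fun x hx y _ => pow_absorb R G i x hx y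

lemma linExt_single (f : G → R) (g : G) (r : R) :
    linExt f (MonoidAlgebra.single g r : MonoidAlgebra R G) = r * f g := by
  show Finsupp.linearCombination R f (Finsupp.single g r) = r * f g
  rw [Finsupp.linearCombination_single, smul_eq_mul]

/-- The coproduct on the group algebra. -/
noncomputable def Δ : MonoidAlgebra R G →ₐ[R] MonoidAlgebra R G ⊗[R] MonoidAlgebra R G :=
  MonoidAlgebra.lift R _ G
    { toFun := fun g => MonoidAlgebra.of R G g ⊗ₜ MonoidAlgebra.of R G g
      map_one' := by
        show MonoidAlgebra.of R G 1 ⊗ₜ[R] MonoidAlgebra.of R G 1 = 1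
        rw [map_one, Algebra.TensorProduct.one_def]
      map_mul' := fun a b => by simp [Algebra.TensorProduct.tmul_mul_tmul] }

lemma Δ_single (g : G) (r : R) :
    Δ R G (MonoidAlgebra.single g r : MonoidAlgebra R G) =
      r • (MonoidAlgebra.of R G g ⊗ₜ[R] MonoidAlgebra.of R G g) := by
  rw [Δ, MonoidAlgebra.lift_single]
  rfl

/-- The sum of the submodules `I^i ⊗ I^j`, `i + j = k`. -/
noncomputable def N (k : ℕ) :
    Submodule R (MonoidAlgebra R G ⊗[R] MonoidAlgebra R G) :=
  Submodule.span R {z | ∃ i j, i + j = k ∧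
    ∃ a ∈ (augIdeal R G) ^ i, ∃ b ∈ (augIdeal R G) ^ j, a ⊗ₜ b = z}

lemma N_mul_mem {i j : ℕ} {u v : MonoidAlgebra R G ⊗[R] MonoidAlgebra R G}
    (hu : u ∈ N R G i) (hv : v ∈ N R G j) : u * v ∈ N R G (i + j) := by
  induction hu using Submodule.span_induction with
  | mem x hx =>
    induction hv using Submodule.span_induction with
    | mem y hy =>
      obtain ⟨i1, j1, h1, a, ha, b, hb, rfl⟩ := hx
      obtain ⟨i2, j2, h2, c, hc, d, hd, rfl⟩ := hy
      apply Submodule.subset_span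
      refine ⟨i1 + i2, j1 + j2, by omega, a * c, ?_, b * d, ?_, ?_⟩
      · exact mul_pow_mem R G i2 c hc i1 a ha
      · exact mul_pow_mem R G j2 d hd j1 b hb
      · simp [Algebra.TensorProduct.tmul_mul_tmul]
    | zero => rw [mul_zero]; exact (N R G (i + j)).zero_mem
    | add a b _ _ ha hb => rw [mul_add]; exact (N R G (i + j)).add_mem ha hb
    | smul r a _ ha => rw [mul_smul_comm]; exact (N R G (i + j)).smul_mem r ha
  | zero => rw [zero_mul]; exact (N R G (i + j)).zero_mem
  | add a b _ _ ha hb => rw [add_mul]; exact (N R G (i + j)).add_mem ha hb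
  | smul r a _ ha => rw [smul_mul_assoc]; exact (N R G (i + j)).smul_mem r ha

lemma N_zero : N R G 0 = ⊤ := by
  rw [eq_top_iff, ← TensorProduct.span_tmul_eq_top R (MonoidAlgebra R G) (MonoidAlgebra R G)]
  apply Submodule.span_mono
  rintro _ ⟨a, b, rfl⟩
  refine ⟨0, 0, rfl, a, ?_, b, ?_, rfl⟩ <;>
    · rw [Submodule.pow_zero, one_eq_top']; trivial

lemma of_sub_one_mem (g : G) : MonoidAlgebra.of R G g - 1 ∈ augIdeal R G := by
  have h1 : ((MonoidAlgebra.lift R R G) 1) (MonoidAlgebra.of R G g) = 1 :=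
    MonoidAlgebra.lift_of 1 g
  have h2 : ((MonoidAlgebra.lift R R G) 1) 1 = 1 := map_one _
  rw [augIdeal, RingHom.mem_ker, map_sub, h1, h2, sub_self]

lemma Δ_sub_mem (x : MonoidAlgebra R G) :
    Δ R G x - 1 ⊗ₜ x ∈
      Submodule.span R {z : MonoidAlgebra R G ⊗[R] MonoidAlgebra R G |
        ∃ a ∈ augIdeal R G, ∃ b, a ⊗ₜ b = z} := by
  set P := Submodule.span R {z : MonoidAlgebra R G ⊗[R] MonoidAlgebra R G |
        ∃ a ∈ augIdeal R G, ∃ b, a ⊗ₜ b = z}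
  set D : MonoidAlgebra R G →ₗ[R] MonoidAlgebra R G ⊗[R] MonoidAlgebra R G :=
    (Δ R G).toLinearMap - (TensorProduct.mk R _ _ 1) with hD
  have key : ∀ x, D x ∈ P := by
    intro x
    induction x using MonoidAlgebra.induction_linear with
    | zero => rw [map_zero]; exact P.zero_mem
    | add a b ha hb => rw [map_add]; exact P.add_mem ha hb
    | single g r =>
      have hsing : (MonoidAlgebra.single g r : MonoidAlgebra R G) = r • MonoidAlgebra.of R G g := by
        simp [MonoidAlgebra.of_apply, MonoidAlgebra.smul_single]
      have hval : D (MonoidAlgebra.single g r) =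
          r • ((MonoidAlgebra.of R G g - 1) ⊗ₜ[R] MonoidAlgebra.of R G g) := by
        rw [hD, LinearMap.sub_apply, AlgHom.toLinearMap_apply, Δ_single,
          TensorProduct.mk_apply, hsing, TensorProduct.tmul_smul,
          TensorProduct.sub_tmul, smul_sub]
      rw [hval]
      exact P.smul_mem r (Submodule.subset_span
        ⟨MonoidAlgebra.of R G g - 1, of_sub_one_mem R G g, MonoidAlgebra.of R G g, rfl⟩)
  simpa [hD] using key x

lemma Δ_one_mem (x : MonoidAlgebra R G) (hx : x ∈ augIdeal R G) :
    Δ R G x ∈ N R G 1 := by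
  have h1 : Δ R G x - 1 ⊗ₜ x ∈ N R G 1 := by
    refine Submodule.span_le.2 ?_ (Δ_sub_mem R G x)
    rintro _ ⟨a, ha, b, rfl⟩
    refine Submodule.subset_span ⟨1, 0, rfl, a, ?_, b, ?_, rfl⟩
    · rw [Submodule.pow_one]; exact ha
    · rw [Submodule.pow_zero, one_eq_top']; trivial
  have h2 : (1 : MonoidAlgebra R G) ⊗ₜ[R] x ∈ N R G 1 := by
    refine Submodule.subset_span ⟨0, 1, rfl, 1, ?_, x, ?_, rfl⟩
    · rw [Submodule.pow_zero, one_eq_top']; trivial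
    · rw [Submodule.pow_one]; exact hx
  simpa using (N R G 1).add_mem h1 h2

lemma Δ_pow_mem : ∀ (k : ℕ) (x : MonoidAlgebra R G), x ∈ (augIdeal R G) ^ k →
    Δ R G x ∈ N R G k := by
  intro k
  induction k with
  | zero => intro x _; rw [N_zero]; trivial
  | succ k ih =>
    intro x hx
    rw [Submodule.pow_succ] at hx
    induction hx using Submodule.mul_induction_on' with
    | mem_mul_mem a ha b hb =>
      rw [map_mul]
      exact N_mul_mem R G (ih a ha) (Δ_one_mem R G b hb)
    | add x hx y hy hx' hy' =>
      rw [map_add]; exact (N R G (k + 1)).add_mem hx' hy'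

noncomputable def L (f g' : G → R) :
    MonoidAlgebra R G ⊗[R] MonoidAlgebra R G →ₗ[R] R :=
  LinearMap.mul' R R ∘ₗ TensorProduct.map (linExt f) (linExt g')

lemma L_tmul (f g' : G → R) (a b : MonoidAlgebra R G) :
    L R G f g' (a ⊗ₜ b) = linExt f a * linExt g' b := rfl

lemma L_Δ (f g' : G → R) (x : MonoidAlgebra R G) :
    L R G f g' (Δ R G x) = linExt (fun t => f t * g' t) x := by
  induction x using MonoidAlgebra.induction_linear with
  | zero => rw [map_zero, map_zero, map_zero]
  | add a b ha hb => rw [map_add, map_add, map_add, ha, hb]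
  | single g r =>
    rw [Δ_single, map_smul, L_tmul, MonoidAlgebra.of_apply]
    rw [linExt_single, linExt_single, linExt_single]
    simp only [smul_eq_mul]; ring

end FTAux

/-- The pointwise product of finite type functions of degrees ≤ m and ≤ n
has finite type degree ≤ m + n. -/
theorem finiteType_mul (R G : Type*) [CommRing R] [Group G]
    (m n : ℕ) (f g : G → R) (hf : FiniteType R m f) (hg : FiniteType R n g) :
    FiniteType R (m + n) (fun x => f x * g x) := by
  intro x hx
  rw [← FTAux.L_Δ R G f g x]
  have hmem : FTAux.Δ R G x ∈ FTAux.N R G (m + n + 1) := FTAux.Δ_pow_mem R G _ x hx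
  have hker : FTAux.N R G (m + n + 1) ≤ LinearMap.ker (FTAux.L R G f g) := by
    apply Submodule.span_le.2
    rintro _ ⟨i, j, hij, a, ha, b, hb, rfl⟩
    rw [SetLike.mem_coe, LinearMap.mem_ker, FTAux.L_tmul]
    rcases le_or_gt (m + 1) i with h | h
    · rw [hf a (FTAux.pow_le_pow R G h ha), zero_mul]
    · have hj : n + 1 ≤ j := by omega
      rw [hg b (FTAux.pow_le_pow R G hj hb), mul_zero]
  exact hker hmem
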